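/- Let G be a (P₃ ∪ P₂)-free graph, A a maximum clique of G with vertices labelled 1,…,ω, and for i < j let C_{ij} be the set of vertices outside A (and not in any earlier C-set in lexicographic order) non-adjacent to both i and j. Then the subgraph induced by each C_{ij} is P₃-free, and hence is a disjoint union of cliques. -/

import Mathlib

open SimpleGraph

/-- `H` occurs as an induced subgraph of `G`. -/
def IsInducedCopy {α β : Type*} (H : SimpleGraph α) (G : SimpleGraph β) : Prop :=
  ∃ f : α ↪ β, ∀ a b : α, G.Adj (f a) (f b) ↔ H.Adj a b

/-- `G` is `H`-free: no induced copy of `H`. -/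
def Free {α β : Type*} (G : SimpleGraph α) (H : SimpleGraph β) : Prop :=
  ¬ IsInducedCopy H G

/-- `P₃ ∪ P₂`: disjoint union of a path on 3 vertices and an edge. -/
def P3UP2 : SimpleGraph (Fin 5) :=
  SimpleGraph.fromRel (fun a b => (a, b) ∈ [((0 : Fin 5), (1 : Fin 5)), (1, 2), (3, 4)])

/-- The diamond: `K₄` minus an edge. -/
def diamondG : SimpleGraph (Fin 4) :=
  SimpleGraph.fromRel (fun a b =>
    (a, b) ∈ [((0 : Fin 4), (2 : Fin 4)), (0, 3), (1, 2), (1, 3), (2, 3)])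

/-- `2K₂`: two disjoint edges. -/
def twoK2 : SimpleGraph (Fin 4) :=
  SimpleGraph.fromRel (fun a b => (a, b) ∈ [((0 : Fin 4), (1 : Fin 4)), (2, 3)])

/-- `P₄ ∪ P₂`. -/
def P4UP2 : SimpleGraph (Fin 6) :=
  SimpleGraph.fromRel (fun a b =>
    (a, b) ∈ [((0 : Fin 6), (1 : Fin 6)), (1, 2), (2, 3), (4, 5)])

/-- The cycle on `n` vertices (for `n ≥ 3`), as a graph on `ZMod n`. -/
def cycG (n : ℕ) : SimpleGraph (ZMod n) :=
  SimpleGraph.fromRel (fun a b => b = a + 1)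

/-- A graph is perfect if every induced subgraph has chromatic number
equal to its clique number. -/
def IsPerfect {V : Type*} (G : SimpleGraph V) : Prop :=
  ∀ s : Set V, (G.induce s).chromaticNumber = ((G.induce s).cliqueNum : ℕ∞)

/-- The set `C_{ij}` attached to a maximum clique enumerated by `f : Fin ω ↪ V`:
vertices outside the clique, non-adjacent to both `f i` and `f j`, where `(i,j)`
is the lexicographically least such pair (this closed form is equivalent to the
iterative definition removing earlier `C`-sets). -/
def Cset {V : Type*} (G : SimpleGraph V) {ω : ℕ} (f : Fin ω ↪ V) (i j : Fin ω) : Set V :=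
  {v | v ∉ Set.range f ∧ ¬ G.Adj v (f i) ∧ ¬ G.Adj v (f j) ∧
    ∀ p q : Fin ω, p < q → ¬ G.Adj v (f p) → ¬ G.Adj v (f q) →
      i < p ∨ (i = p ∧ j ≤ q)}

/-- The set `I_a` attached to a maximum clique enumerated by `f : Fin ω ↪ V`:
vertices outside the clique adjacent to every clique vertex except `f k`. -/
def Iset {V : Type*} (G : SimpleGraph V) {ω : ℕ} (f : Fin ω ↪ V) (k : Fin ω) : Set V :=
  {v | v ∉ Set.range f ∧ ¬ G.Adj v (f k) ∧ ∀ l : Fin ω, l ≠ k → G.Adj v (f l)}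

theorem stmt2 {V : Type*} [Fintype V] (G : SimpleGraph V) {ω : ℕ} (f : Fin ω ↪ V)
    (hA : G.IsClique (Set.range f))
    (hmax : ∀ t : Finset V, G.IsClique (t : Set V) → t.card ≤ ω)
    (hfree : _root_.Free G P3UP2) (i j : Fin ω) (hij : i < j) :
    _root_.Free (G.induce (Cset G f i j)) (pathGraph 3) ∧
      ∀ x ∈ Cset G f i j, ∀ y ∈ Cset G f i j, ∀ z ∈ Cset G f i j,
        G.Adj x y → G.Adj y z → x ≠ z → G.Adj x z := by
  have hfij : G.Adj (f i) (f j) :=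
    hA (Set.mem_range_self i) (Set.mem_range_self j) (f.injective.ne hij.ne)
  have key : ∀ x ∈ Cset G f i j, ∀ y ∈ Cset G f i j, ∀ z ∈ Cset G f i j,
      G.Adj x y → G.Adj y z → x ≠ z → G.Adj x z := by
    intro x hx y hy z hz hxy hyz hxz
    by_contra hnadj
    obtain ⟨hxR, hxi, hxj, -⟩ := hx
    obtain ⟨hyR, hyi, hyj, -⟩ := hy
    obtain ⟨hzR, hzi, hzj, -⟩ := hz
    have hxi' : x ≠ f i := fun h => hxR ⟨i, h.symm⟩
    have hxj' : x ≠ f j := fun h => hxR ⟨j, h.symm⟩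
    have hyi' : y ≠ f i := fun h => hyR ⟨i, h.symm⟩
    have hyj' : y ≠ f j := fun h => hyR ⟨j, h.symm⟩
    have hzi' : z ≠ f i := fun h => hzR ⟨i, h.symm⟩
    have hzj' : z ≠ f j := fun h => hzR ⟨j, h.symm⟩
    have hij' : f i ≠ f j := f.injective.ne hij.ne
    apply hfree
    have hinj : Function.Injective ![x, y, z, f i, f j] := by
      intro a b hab
      fin_cases a <;> fin_cases b <;> simp_all <;>
        first
          | rfl
          | exact hxy.ne hab | exact hxy.ne' hab.symm
          | exact hyz.ne hab | exact hyz.ne' hab.symm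
          | exact hxz hab | exact hxz hab.symm
          | exact hxi' hab | exact hxi' hab.symm
          | exact hxj' hab | exact hxj' hab.symm
          | exact hyi' hab | exact hyi' hab.symm
          | exact hyj' hab | exact hyj' hab.symm
          | exact hzi' hab | exact hzi' hab.symm
          | exact hzj' hab | exact hzj' hab.symm
          | exact hij' hab | exact hij' hab.symm
    refine ⟨⟨![x, y, z, f i, f j], hinj⟩, ?_⟩
    intro a b
    have hix : ¬ G.Adj (f i) x := fun h => hxi h.symm
    have hjx : ¬ G.Adj (f j) x := fun h => hxj h.symm
    have hiy : ¬ G.Adj (f i) y := fun h => hyi h.symm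
    have hjy : ¬ G.Adj (f j) y := fun h => hyj h.symm
    have hiz : ¬ G.Adj (f i) z := fun h => hzi h.symm
    have hjz : ¬ G.Adj (f j) z := fun h => hzj h.symm
    have hyx : G.Adj y x := hxy.symm
    have hzy : G.Adj z y := hyz.symm
    have hji : G.Adj (f j) (f i) := hfij.symm
    have hzx : ¬ G.Adj z x := fun h => hnadj h.symm
    fin_cases a <;> fin_cases b <;>
      simp_all [P3UP2, SimpleGraph.fromRel_adj, Prod.ext_iff]
  refine ⟨?_, key⟩
  rintro ⟨g, hg⟩
  have h01 : G.Adj (g 0 : V) (g 1 : V) := (hg 0 1).mpr (by simp [SimpleGraph.pathGraph_adj])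
  have h12 : G.Adj (g 1 : V) (g 2 : V) := (hg 1 2).mpr (by simp [SimpleGraph.pathGraph_adj])
  have h02 : ¬ G.Adj (g 0 : V) (g 2 : V) := fun h => by
    have h2 := (hg 0 2).mp h
    revert h2; simp [SimpleGraph.pathGraph_adj]
  have hne : (g 0 : V) ≠ (g 2 : V) := by
    intro h
    exact absurd (Subtype.ext h) (g.injective.ne (by decide))
  exact h02 (key _ (g 0).2 _ (g 1).2 _ (g 2).2 h01 h12 hne)
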